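/- arXiv:1106.3498 — 2 statements merged into one kernel-verified Lean document; each statement's English description precedes it below -/
import Mathlib

section
/- Translation of a single AND gate into a clause is correct for unit propagation: let φ be a CNF formula, let w₁,…,w_m, u be literals, and let ψ = φ ∪ {{¬w₁,…,¬w_m, u}} where u's variable does not occur in φ. Then u is derivable from ψ by unit propagation if and only if all of w₁,…,w_m are derivable from φ by unit propagation. -/
/-- A literal is a propositional variable paired with a polarity. -/
abbrev Lit (V : Type*) := V × Bool

/-- The complement of a literal. -/
def Lit.neg {V : Type*} (l : Lit V) : Lit V := (l.1, !l.2)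

/-- A clause is a finite set of literals. -/
abbrev Clause (V : Type*) := Finset (Lit V)

/-- A CNF formula is a finite set of clauses. -/
abbrev CNF (V : Type*) := Finset (Clause V)

/-- A literal is true under a complete assignment. -/
def litTrue {V : Type*} (A : V → Bool) (l : Lit V) : Prop := A l.1 = l.2

/-- A clause is satisfied if some literal in it is true. -/
def satClause {V : Type*} (A : V → Bool) (c : Clause V) : Prop := ∃ l ∈ c, litTrue A l

/-- A CNF formula is satisfied if every clause is satisfied. -/
def satCNF {V : Type*} (A : V → Bool) (φ : CNF V) : Prop := ∀ c ∈ φ, satClause A c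

/-- Derivability of a literal by unit propagation: `w` is derivable if some clause
`{l₁,…,l_q,w} ∈ φ` has the complements of all the `lᵢ` derivable. -/
inductive UPDeriv {V : Type*} (φ : CNF V) : Lit V → Prop
  | step (c : Clause V) (w : Lit V) (hc : c ∈ φ) (hw : w ∈ c)
      (h : ∀ l ∈ c, l ≠ w → UPDeriv φ (Lit.neg l)) : UPDeriv φ w

theorem UPDeriv.mono' {V : Type*} {φ ψ : CNF V} (hsub : φ ⊆ ψ) {l : Lit V}
    (hd : UPDeriv φ l) : UPDeriv ψ l := by
  induction hd with
  | step c w hc hw h ih => exact .step c w (hsub hc) hw (fun l hl hne => ih l hl hne)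

@[simp] theorem Lit.neg_neg {V : Type*} (l : Lit V) : Lit.neg (Lit.neg l) = l := by
  simp [Lit.neg]

/-- Translation of an AND gate into a clause is correct for unit propagation:
with u fresh, u is derivable from φ ∪ {{¬w₁,…,¬w_m,u}} iff all wᵢ are derivable from φ. -/
theorem and_gate_correct {V : Type*} [DecidableEq V] (φ : CNF V)
    (ws : Finset (Lit V)) (u : V)
    (hfresh : ∀ c ∈ φ, ∀ l ∈ c, l.1 ≠ u) (hws : ∀ w ∈ ws, w.1 ≠ u) :
    UPDeriv (insert (ws.image Lit.neg ∪ {((u, true) : Lit V)}) φ) (u, true) ↔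
      ∀ w ∈ ws, UPDeriv φ w := by
  set newc : Clause V := ws.image Lit.neg ∪ {((u, true) : Lit V)} with hnewc
  set ψ : CNF V := insert newc φ with hψ
  have hA : ¬ UPDeriv ψ ((u, false) : Lit V) := by
    intro h
    cases h with
    | step c w hc hw h' =>
      rcases Finset.mem_insert.mp hc with rfl | hcφ
      · rcases Finset.mem_union.mp hw with h1 | h2
        · obtain ⟨w', hw', he⟩ := Finset.mem_image.mp h1
          exact hws w' hw' (by simpa [Lit.neg] using congrArg Prod.fst he)
        · simp at h2
      · exact hfresh c hcφ _ hw rfl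
  have hB : ∀ l, UPDeriv ψ l → l.1 ≠ u → UPDeriv φ l := by
    intro l hd
    induction hd with
    | step c w hc hw h' ih =>
      intro hne
      rcases Finset.mem_insert.mp hc with rfl | hcφ
      · have hu : ((u, true) : Lit V) ∈ newc := by simp [hnewc]
        have hne' : ((u, true) : Lit V) ≠ w := fun h => hne (by rw [← h])
        exact absurd (h' _ hu hne') (by simpa [Lit.neg] using hA)
      · refine .step c w hcφ hw (fun l' hl' hne' => ih l' hl' hne' ?_)
        simpa [Lit.neg] using hfresh c hcφ l' hl'
  constructor
  · intro h
    cases h with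
    | step c w hc hw h' =>
      rcases Finset.mem_insert.mp hc with rfl | hcφ
      · intro w hwmem
        have hmem : Lit.neg w ∈ newc :=
          Finset.mem_union_left _ (Finset.mem_image_of_mem _ hwmem)
        have hne : Lit.neg w ≠ ((u, true) : Lit V) := fun h =>
          hws w hwmem (congrArg Prod.fst h)
        have := h' _ hmem hne
        rw [Lit.neg_neg] at this
        exact hB w this (hws w hwmem)
      · exact absurd rfl (hfresh c hcφ _ hw)
  · intro h
    refine .step newc ((u, true) : Lit V) (Finset.mem_insert_self _ _) (by simp [hnewc]) ?_
    intro l hl hne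
    rcases Finset.mem_union.mp hl with h1 | h2
    · obtain ⟨w', hw', rfl⟩ := Finset.mem_image.mp h1
      rw [Lit.neg_neg]
      exact (h w' hw').mono' (Finset.subset_insert _ _)
    · exact absurd (Finset.mem_singleton.mp h2) hne
end

section
/- Every monotone Boolean function f : {0,1}ⁿ → {0,1} with f not identically 1 on the minimal element is computable by unit propagation: there exists a CNF formula φ over variables v₁,…,v_n and auxiliary variables, and an output variable s, such that for every consistent partial assignment I on {v₁,…,v_n}, unit propagation on φ|_I derives no complementary pair, and derives s if and only if f(I_B) = 1, where I_B ∈ {0,1}^{2n} is the Boolean representation of I and f is regarded as a monotone function on {0,1}^{2n}. -/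
/-- `φ|_I` : the formula `φ` together with the unit clauses `{l}` for `l ∈ I`. -/
def restrict {V : Type*} [DecidableEq V] (φ : CNF V) (I : Finset (Lit V)) : CNF V :=
  φ ∪ I.image (fun l => ({l} : Clause V))

/-- A set of literals is consistent if no variable occurs in both polarities. -/
def Consistent {V : Type*} (I : Finset (Lit V)) : Prop := ∀ l ∈ I, Lit.neg l ∉ I

/-- Auxiliary variables: one per true point of `f`, plus an output variable `none`. -/
abbrev UPAux (n : ℕ) (f : (Lit (Fin n) → Bool) → Bool) : Type :=
  Option {a : Lit (Fin n) → Bool // f a = true}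

instance UPinstLit (n : ℕ) (f : (Lit (Fin n) → Bool) → Bool) :
    DecidableEq (Lit (Fin n ⊕ UPAux n f)) := instDecidableEqProd

instance UPinstClause (n : ℕ) (f : (Lit (Fin n) → Bool) → Bool) :
    DecidableEq (Clause (Fin n ⊕ UPAux n f)) := Finset.decidableEq

/-- The clause encoding the conjunction for a true point `a`. -/
def UPC {n : ℕ} {f : (Lit (Fin n) → Bool) → Bool} (a : {a : Lit (Fin n) → Bool // f a = true}) :
    Clause (Fin n ⊕ UPAux n f) :=
  insert ((Sum.inr (some a) : Fin n ⊕ UPAux n f), true)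
    ((Finset.univ.filter (fun l : Lit (Fin n) => a.1 l = true)).image
      (fun l => ((Sum.inl l.1 : Fin n ⊕ UPAux n f), !l.2)))

/-- The clause linking the auxiliary variable of `a` to the output variable. -/
def UPD {n : ℕ} {f : (Lit (Fin n) → Bool) → Bool} (a : {a : Lit (Fin n) → Bool // f a = true}) :
    Clause (Fin n ⊕ UPAux n f) :=
  {((Sum.inr (some a) : Fin n ⊕ UPAux n f), false),
   ((Sum.inr (none : UPAux n f) : Fin n ⊕ UPAux n f), true)}

/-- The CNF computing `f` by unit propagation. -/
def UPphi (n : ℕ) (f : (Lit (Fin n) → Bool) → Bool) : CNF (Fin n ⊕ UPAux n f) :=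
  Finset.univ.image UPC ∪ Finset.univ.image UPD

/-- Every monotone Boolean function on {0,1}^{2n} (inputs indexed by the 2n literals
over v₁,…,v_n) that is false on the minimal element is computable by unit propagation:
there is a CNF formula over the input variables and auxiliary variables, with an
output variable s, such that for every consistent partial assignment I, unit
propagation on φ|_I derives no complementary pair and derives s iff f(I_B) = 1. -/
theorem monotone_function_propagatable (n : ℕ)
    (f : (Lit (Fin n) → Bool) → Bool)
    (hmono : ∀ a b : Lit (Fin n) → Bool, (∀ l, a l ≤ b l) → f a ≤ f b)
    (hbot : f (fun _ => false) = false) :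
    ∃ (W : Type) (_ : DecidableEq W) (φ : CNF (Fin n ⊕ W)) (s : Fin n ⊕ W),
      ∀ I : Finset (Lit (Fin n)), Consistent I →
        (¬ ∃ l : Lit (Fin n ⊕ W),
            UPDeriv (restrict φ (I.image (fun l => ((Sum.inl l.1 : Fin n ⊕ W), l.2)))) l ∧
            UPDeriv (restrict φ (I.image (fun l => ((Sum.inl l.1 : Fin n ⊕ W), l.2))))
              (Lit.neg l)) ∧
        (UPDeriv (restrict φ (I.image (fun l => ((Sum.inl l.1 : Fin n ⊕ W), l.2))))
            (s, true) ↔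
          f (fun l => decide (l ∈ I)) = true) := by
  refine ⟨UPAux n f, inferInstance, UPphi n f, Sum.inr (none : UPAux n f), ?_⟩
  intro I hI
  set I' : Finset (Lit (Fin n ⊕ UPAux n f)) :=
    I.image (fun l => ((Sum.inl l.1 : Fin n ⊕ UPAux n f), l.2)) with hI'def
  set R : CNF (Fin n ⊕ UPAux n f) := restrict (UPphi n f) I' with hRdef
  -- the invariant preserved by unit propagation
  set Good : Lit (Fin n ⊕ UPAux n f) → Prop := fun L =>
    (∃ l ∈ I, L = ((Sum.inl l.1 : Fin n ⊕ UPAux n f), l.2)) ∨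
    (∃ a : {a : Lit (Fin n) → Bool // f a = true},
        L = ((Sum.inr (some a) : Fin n ⊕ UPAux n f), true) ∧ ∀ l, a.1 l = true → l ∈ I) ∨
    (L = ((Sum.inr (none : UPAux n f) : Fin n ⊕ UPAux n f), true) ∧
      ∃ a : {a : Lit (Fin n) → Bool // f a = true}, ∀ l, a.1 l = true → l ∈ I)
    with hGood
  have hgood : ∀ L, UPDeriv R L → Good L := by
    intro L h
    induction h with
    | step c w hc hw h ih =>
      have hc' : c ∈ UPphi n f ∨ c ∈ I'.image (fun l => ({l} : Clause (Fin n ⊕ UPAux n f))) :=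
        Finset.mem_union.mp hc
      rcases hc' with hc' | hc'
      · rw [UPphi, Finset.mem_union] at hc'
        rcases hc' with hc' | hc'
        · -- c = UPC a
          obtain ⟨a, -, rfl⟩ := Finset.mem_image.mp hc'
          rw [UPC, Finset.mem_insert] at hw
          rcases hw with rfl | hw
          · -- w is the head
            refine Or.inr (Or.inl ⟨a, rfl, ?_⟩)
            intro l hl
            have hmem : ((Sum.inl l.1 : Fin n ⊕ UPAux n f), !l.2) ∈ UPC a := by
              rw [UPC]
              apply Finset.mem_insert_of_mem
              exact Finset.mem_image.mpr ⟨l, Finset.mem_filter.mpr ⟨Finset.mem_univ _, hl⟩, rfl⟩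
            have hne : ((Sum.inl l.1 : Fin n ⊕ UPAux n f), !l.2) ≠
                ((Sum.inr (some a) : Fin n ⊕ UPAux n f), true) := by simp
            have hg := ih _ hmem hne
            rw [hGood] at hg
            simp only [Lit.neg, Bool.not_not] at hg
            rcases hg with ⟨l', hl', heq⟩ | ⟨a', heq, -⟩ | ⟨heq, -⟩
            · simp only [Prod.mk.injEq, Sum.inl.injEq] at heq
              have : l = l' := Prod.ext heq.1 heq.2
              rwa [this]
            · simp at heq
            · simp at heq
          · -- w in the body: impossible, would need head's negation
            obtain ⟨l, -, rfl⟩ := Finset.mem_image.mp hw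
            have hne : ((Sum.inr (some a) : Fin n ⊕ UPAux n f), true) ≠
                ((Sum.inl l.1 : Fin n ⊕ UPAux n f), !l.2) := by simp
            have hhead : ((Sum.inr (some a) : Fin n ⊕ UPAux n f), true) ∈ UPC a := by
              rw [UPC]; exact Finset.mem_insert_self _ _
            have hg := ih _ hhead hne
            rw [hGood] at hg
            simp only [Lit.neg] at hg
            rcases hg with ⟨l', -, heq⟩ | ⟨a', heq, -⟩ | ⟨heq, -⟩
            · simp at heq
            · simp at heq
            · simp at heq
        · -- c = UPD a
          obtain ⟨a, -, rfl⟩ := Finset.mem_image.mp hc'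
          have hw' : w = ((Sum.inr (some a) : Fin n ⊕ UPAux n f), false) ∨
              w = ((Sum.inr (none : UPAux n f) : Fin n ⊕ UPAux n f), true) := by
            simpa [UPD] using hw
          rcases hw' with rfl | rfl
          · -- impossible: would need negation of (inr none, true)
            have hmem : ((Sum.inr (none : UPAux n f) : Fin n ⊕ UPAux n f), true) ∈ UPD a := by
              simp [UPD]
            have hne : ((Sum.inr (none : UPAux n f) : Fin n ⊕ UPAux n f), true) ≠
                ((Sum.inr (some a) : Fin n ⊕ UPAux n f), false) := by simp
            have hg := ih _ hmem hne
            rw [hGood] at hg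
            simp only [Lit.neg] at hg
            rcases hg with ⟨l', -, heq⟩ | ⟨a', heq, -⟩ | ⟨heq, -⟩
            · simp at heq
            · simp at heq
            · simp at heq
          · -- w = s : need (inr (some a), true) derivable
            have hmem : ((Sum.inr (some a) : Fin n ⊕ UPAux n f), false) ∈ UPD a := by
              simp [UPD]
            have hne : ((Sum.inr (some a) : Fin n ⊕ UPAux n f), false) ≠
                ((Sum.inr (none : UPAux n f) : Fin n ⊕ UPAux n f), true) := by simp
            have hg := ih _ hmem hne
            rw [hGood] at hg
            simp only [Lit.neg] at hg
            rcases hg with ⟨l', -, heq⟩ | ⟨a', heq, ha'⟩ | ⟨heq, -⟩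
            · simp at heq
            · simp only [Prod.mk.injEq, Sum.inr.injEq, Option.some.injEq] at heq
              have : a = a' := heq.1
              subst this
              exact Or.inr (Or.inr ⟨rfl, a, ha'⟩)
            · simp at heq
      · -- unit clause from I
        obtain ⟨l0, hl0, rfl⟩ := Finset.mem_image.mp hc'
        obtain ⟨l, hl, rfl⟩ := Finset.mem_image.mp hl0
        have : w = ((Sum.inl l.1 : Fin n ⊕ UPAux n f), l.2) := Finset.mem_singleton.mp hw
        exact Or.inl ⟨l, hl, this⟩
  -- derivability of input literals
  have hderivI : ∀ l ∈ I, UPDeriv R ((Sum.inl l.1 : Fin n ⊕ UPAux n f), l.2) := by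
    intro l hl
    refine UPDeriv.step _ _ ?_ (Finset.mem_singleton_self _) ?_
    · refine Finset.mem_union.mpr (Or.inr ?_)
      exact Finset.mem_image.mpr ⟨_, Finset.mem_image.mpr ⟨l, hl, rfl⟩, rfl⟩
    · intro l' hl' hne
      exact absurd (Finset.mem_singleton.mp hl') hne
  constructor
  · -- no complementary pair
    rintro ⟨L, h1, h2⟩
    have g1 := hgood _ h1
    have g2 := hgood _ h2
    rw [hGood] at g1 g2
    simp only [Lit.neg] at g2
    rcases g1 with ⟨l, hl, rfl⟩ | ⟨a, rfl, -⟩ | ⟨rfl, -⟩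
    · rcases g2 with ⟨l', hl', heq⟩ | ⟨a', heq, -⟩ | ⟨heq, -⟩
      · simp only [Prod.mk.injEq, Sum.inl.injEq] at heq
        have : Lit.neg l = l' := by
          rw [Lit.neg]; exact Prod.ext heq.1 heq.2
        exact hI l hl (this ▸ hl')
      · simp at heq
      · simp at heq
    · rcases g2 with ⟨l', -, heq⟩ | ⟨a', heq, -⟩ | ⟨heq, -⟩
      · simp at heq
      · simp at heq
      · simp at heq
    · rcases g2 with ⟨l', -, heq⟩ | ⟨a', heq, -⟩ | ⟨heq, -⟩
      · simp at heq
      · simp at heq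
      · simp at heq
  · constructor
    · -- s derivable → f I_B = true
      intro h
      have g := hgood _ h
      rw [hGood] at g
      rcases g with ⟨l, -, heq⟩ | ⟨a, heq, -⟩ | ⟨-, a, ha⟩
      · simp at heq
      · simp at heq
      · have hle : ∀ l, a.1 l ≤ (decide (l ∈ I)) := by
          intro l
          by_cases hl : a.1 l = true
          · simp [ha l hl]
          · simp [Bool.eq_false_iff.mpr hl]
        have := hmono a.1 (fun l => decide (l ∈ I)) hle
        rw [a.2] at this
        exact le_antisymm (by simp) this
    · -- f I_B = true → s derivable
      intro hf
      set a : Lit (Fin n) → Bool := fun l => decide (l ∈ I) with hadef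
      have hwA : UPDeriv R ((Sum.inr (some ⟨a, hf⟩) : Fin n ⊕ UPAux n f), true) := by
        refine UPDeriv.step (UPC ⟨a, hf⟩) _ ?_ ?_ ?_
        · refine Finset.mem_union.mpr (Or.inl ?_)
          rw [UPphi]
          exact Finset.mem_union_left _ (Finset.mem_image.mpr ⟨_, Finset.mem_univ _, rfl⟩)
        · rw [UPC]; exact Finset.mem_insert_self _ _
        · intro l' hl' hne
          rw [UPC, Finset.mem_insert] at hl'
          rcases hl' with rfl | hl'
          · exact absurd rfl hne
          · obtain ⟨l, hlmem, rfl⟩ := Finset.mem_image.mp hl'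
            have hl : l ∈ I := by
              have := (Finset.mem_filter.mp hlmem).2
              simpa [hadef] using this
            have heq : Lit.neg ((Sum.inl l.1 : Fin n ⊕ UPAux n f), !l.2)
                = ((Sum.inl l.1 : Fin n ⊕ UPAux n f), l.2) := by simp [Lit.neg]
            rw [heq]
            exact hderivI l hl
      refine UPDeriv.step (UPD ⟨a, hf⟩) _ ?_ ?_ ?_
      · refine Finset.mem_union.mpr (Or.inl ?_)
        rw [UPphi]
        exact Finset.mem_union_right _ (Finset.mem_image.mpr ⟨_, Finset.mem_univ _, rfl⟩)
      · simp [UPD]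
      · intro l' hl' hne
        have hl'' : l' = ((Sum.inr (some ⟨a, hf⟩) : Fin n ⊕ UPAux n f), false) ∨
            l' = ((Sum.inr (none : UPAux n f) : Fin n ⊕ UPAux n f), true) := by
          simpa [UPD] using hl'
        rcases hl'' with rfl | rfl
        · have heq : Lit.neg ((Sum.inr (some ⟨a, hf⟩) : Fin n ⊕ UPAux n f), false)
              = ((Sum.inr (some ⟨a, hf⟩) : Fin n ⊕ UPAux n f), true) := by simp [Lit.neg]
          rw [heq]; exact hwA
        · exact absurd rfl hne
end
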